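/- Let â, b̂ ∈ ℝ and let u ∈ ℝ⁶ have density ρ ≠ 0. Set u' = Exp(â,b̂)·u. Then the primitive variables transform as: ρ(u') = ρ(u), v₁(u') = v₁(u) + â, v₂(u') = v₂(u) + b̂, p₁₁(u') = p₁₁(u), p₁₂(u') = p₁₂(u), p₂₂(u') = p₂₂(u). In particular, for every â, b̂ ∈ ℝ the map u ↦ Exp(â,b̂)·u sends U_ad into U_ad (the exact source-ODE update is unconditionally positivity preserving, both forward and backward in time). -/
import Mathlib

noncomputable section

/-- Density of a Ten-Moment state. -/
def rho (u : Fin 6 → ℝ) : ℝ := u 0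

/-- First velocity component. -/
def v1 (u : Fin 6 → ℝ) : ℝ := u 1 / u 0

/-- Second velocity component. -/
def v2 (u : Fin 6 → ℝ) : ℝ := u 2 / u 0

/-- Pressure component `p₁₁`. -/
def p11 (u : Fin 6 → ℝ) : ℝ := 2 * u 3 - (u 1) ^ 2 / u 0

/-- Pressure component `p₁₂`. -/
def p12 (u : Fin 6 → ℝ) : ℝ := 2 * u 4 - u 1 * u 2 / u 0

/-- Pressure component `p₂₂`. -/
def p22 (u : Fin 6 → ℝ) : ℝ := 2 * u 5 - (u 2) ^ 2 / u 0

/-- The admissible set: positive density and positive definite pressure tensor. -/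
def Uad : Set (Fin 6 → ℝ) :=
  {u | 0 < rho u ∧ 0 < p11 u ∧ 0 < p11 u * p22 u - (p12 u) ^ 2}

/-- The explicit exponential matrix of the source operator. -/
def ExpM (a b : ℝ) : Matrix (Fin 6) (Fin 6) ℝ :=
  !![1, 0, 0, 0, 0, 0;
     a, 1, 0, 0, 0, 0;
     b, 0, 1, 0, 0, 0;
     a ^ 2 / 2, a, 0, 1, 0, 0;
     a * b / 2, b / 2, a / 2, 0, 1, 0;
     b ^ 2 / 2, 0, b, 0, 0, 1]

lemma expM_mulVec_zero (a b : ℝ) (u : Fin 6 → ℝ) : (ExpM a b).mulVec u 0 = u 0 := by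
  simp only [Matrix.mulVec, dotProduct, Fin.sum_univ_six]
  show (1:ℝ) * u 0 + 0 * u 1 + 0 * u 2 + 0 * u 3 + 0 * u 4 + 0 * u 5 = _
  ring

lemma expM_mulVec_one (a b : ℝ) (u : Fin 6 → ℝ) :
    (ExpM a b).mulVec u 1 = a * u 0 + u 1 := by
  simp only [Matrix.mulVec, dotProduct, Fin.sum_univ_six]
  show a * u 0 + 1 * u 1 + 0 * u 2 + 0 * u 3 + 0 * u 4 + 0 * u 5 = _
  ring

lemma expM_mulVec_two (a b : ℝ) (u : Fin 6 → ℝ) :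
    (ExpM a b).mulVec u 2 = b * u 0 + u 2 := by
  simp only [Matrix.mulVec, dotProduct, Fin.sum_univ_six]
  show b * u 0 + 0 * u 1 + 1 * u 2 + 0 * u 3 + 0 * u 4 + 0 * u 5 = _
  ring

lemma expM_mulVec_three (a b : ℝ) (u : Fin 6 → ℝ) :
    (ExpM a b).mulVec u 3 = a ^ 2 / 2 * u 0 + a * u 1 + u 3 := by
  simp only [Matrix.mulVec, dotProduct, Fin.sum_univ_six]
  show a ^ 2 / 2 * u 0 + a * u 1 + 0 * u 2 + 1 * u 3 + 0 * u 4 + 0 * u 5 = _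
  ring

lemma expM_mulVec_four (a b : ℝ) (u : Fin 6 → ℝ) :
    (ExpM a b).mulVec u 4 = a * b / 2 * u 0 + b / 2 * u 1 + a / 2 * u 2 + u 4 := by
  simp only [Matrix.mulVec, dotProduct, Fin.sum_univ_six]
  show a * b / 2 * u 0 + b / 2 * u 1 + a / 2 * u 2 + 0 * u 3 + 1 * u 4 + 0 * u 5 = _
  ring

lemma expM_mulVec_five (a b : ℝ) (u : Fin 6 → ℝ) :
    (ExpM a b).mulVec u 5 = b ^ 2 / 2 * u 0 + b * u 2 + u 5 := by
  simp only [Matrix.mulVec, dotProduct, Fin.sum_univ_six]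
  show b ^ 2 / 2 * u 0 + 0 * u 1 + b * u 2 + 0 * u 3 + 0 * u 4 + 1 * u 5 = _
  ring

lemma expM_main (a b : ℝ) (u : Fin 6 → ℝ) (hρ : rho u ≠ 0) :
    rho ((ExpM a b).mulVec u) = rho u ∧
    v1 ((ExpM a b).mulVec u) = v1 u + a ∧
    v2 ((ExpM a b).mulVec u) = v2 u + b ∧
    p11 ((ExpM a b).mulVec u) = p11 u ∧
    p12 ((ExpM a b).mulVec u) = p12 u ∧
    p22 ((ExpM a b).mulVec u) = p22 u := by
  have h0 : u 0 ≠ 0 := hρ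
  simp only [rho, v1, v2, p11, p12, p22, expM_mulVec_zero, expM_mulVec_one,
    expM_mulVec_two, expM_mulVec_three, expM_mulVec_four, expM_mulVec_five]
  refine ⟨trivial, ?_, ?_, ?_, ?_, ?_⟩ <;> field_simp <;> ring

/-- The exact source-ODE update `u ↦ Exp(â,b̂)·u` shifts the velocities and leaves
density and pressure tensor unchanged; in particular it preserves admissibility. -/
theorem expM_primitive_transform (a b : ℝ) (u : Fin 6 → ℝ) (hρ : rho u ≠ 0) :
    (rho ((ExpM a b).mulVec u) = rho u ∧
     v1 ((ExpM a b).mulVec u) = v1 u + a ∧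
     v2 ((ExpM a b).mulVec u) = v2 u + b ∧
     p11 ((ExpM a b).mulVec u) = p11 u ∧
     p12 ((ExpM a b).mulVec u) = p12 u ∧
     p22 ((ExpM a b).mulVec u) = p22 u) ∧
    (∀ a' b' : ℝ, ∀ w ∈ Uad, (ExpM a' b').mulVec w ∈ Uad) := by
  refine ⟨expM_main a b u hρ, ?_⟩
  intro a' b' w hw
  obtain ⟨hρw, h11, hdet⟩ := hw
  obtain ⟨e0, _, _, e3, e4, e5⟩ := expM_main a' b' w hρw.ne'
  exact ⟨e0 ▸ hρw, e3 ▸ h11, by rw [e3, e4, e5]; exact hdet⟩
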